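/- Let G be a finitely generated group and H a subgroup of finite index. Then d(H) - 1 ≤ |G : H| · (d(G) - 1), where d(·) denotes the minimal number of generators. -/

import Mathlib

/-- The minimal number of generators of a group. -/
noncomputable def minGens (G : Type*) [Group G] : ℕ :=
  sInf {n | ∃ S : Finset G, S.card = n ∧ Subgroup.closure (S : Set G) = ⊤}

namespace SchreierAux

open Subgroup

attribute [local instance] Classical.propDecidable

variable {G : Type*} [Group G] {H : Subgroup G}

abbrev Q (H : Subgroup G) := Quotient (QuotientGroup.rightRel H)

lemma mk_mul_right {x y : G} (h : (Quotient.mk'' x : Q H) = Quotient.mk'' y) (g : G) :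
    (Quotient.mk'' (x * g) : Q H) = Quotient.mk'' (y * g) := by
  rw [Quotient.eq''] at h ⊢
  rw [QuotientGroup.rightRel_apply] at h ⊢
  simpa [mul_assoc] using h

lemma closed_eq_univ {S : Finset G} (hS : closure (S : Set G) = ⊤)
    (C : Finset (Q H)) (h1 : (Quotient.mk'' 1 : Q H) ∈ C)
    (hcl : ∀ g : G, (Quotient.mk'' g : Q H) ∈ C → ∀ s ∈ S,
      (Quotient.mk'' (g * s) : Q H) ∈ C ∧ (Quotient.mk'' (g * s⁻¹) : Q H) ∈ C) :
    ∀ q : Q H, q ∈ C := by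
  have key : ∀ x ∈ Submonoid.closure ((S : Set G) ∪ (S : Set G)⁻¹),
      ∀ g : G, (Quotient.mk'' g : Q H) ∈ C → (Quotient.mk'' (g * x) : Q H) ∈ C := by
    intro x hx
    induction hx using Submonoid.closure_induction with
    | mem x hx =>
      intro g hg
      rcases hx with hx | hx
      · exact (hcl g hg x hx).1
      · obtain ⟨s, hs, rfl⟩ : ∃ s ∈ S, s⁻¹ = x := by
          rcases Set.mem_inv.mp hx with h
          exact ⟨x⁻¹, by simpa using h, by simp⟩
        exact (hcl g hg _ hs).2
    | one => intro g hg; simpa using hg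
    | mul x y hx hy ihx ihy =>
      intro g hg
      have := ihy (g * x) (ihx g hg)
      simpa [mul_assoc] using this
  intro q
  have hx : q.out ∈ Submonoid.closure ((S : Set G) ∪ (S : Set G)⁻¹) := by
    rw [← closure_toSubmonoid, hS]
    trivial
  have := key q.out hx 1 h1
  simpa [Quotient.out_eq'] using this

/-- Invariant for the greedy construction of a Schreier transversal. -/
def Inv (H : Subgroup G) (S : Finset G) (C : Finset (Q H)) (rep : Q H → G)
    (φ : Q H → G × G) : Prop :=
  (Quotient.mk'' 1 : Q H) ∈ C ∧ rep (Quotient.mk'' 1) = 1 ∧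
  (∀ c ∈ C, Quotient.mk'' (rep c) = c) ∧
  (∀ c ∈ C, c ≠ Quotient.mk'' 1 →
    (φ c).2 ∈ S ∧ (φ c).1 ∈ rep '' (C : Set (Q H)) ∧
      (φ c).1 * (φ c).2 ∈ rep '' (C : Set (Q H))) ∧
  Set.InjOn φ ((C : Set (Q H)) \ {Quotient.mk'' 1})

lemma Inv.step {S : Finset G} {C : Finset (Q H)} {rep : Q H → G} {φ : Q H → G × G}
    (hI : Inv H S C rep φ) (g : G) (p : G × G) (hg : (Quotient.mk'' g : Q H) ∉ C)
    (hp2 : p.2 ∈ S)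
    (hcase : (p.1 = g ∧ p.1 * p.2 ∈ rep '' (C : Set (Q H))) ∨
      (p.1 ∈ rep '' (C : Set (Q H)) ∧ p.1 * p.2 = g)) :
    Inv H S (insert (Quotient.mk'' g) C)
      (Function.update rep (Quotient.mk'' g) g)
      (Function.update φ (Quotient.mk'' g) p) := by
  obtain ⟨h1, hrep1, hsec, hφ, hinj⟩ := hI
  have hb : (Quotient.mk'' 1 : Q H) ≠ Quotient.mk'' g := fun h => hg (h ▸ h1)
  have hne : ∀ c ∈ C, c ≠ Quotient.mk'' g := fun c hc h => hg (h ▸ hc)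
  have hrepC : ∀ c ∈ C, Function.update rep (Quotient.mk'' g) g c = rep c := fun c hc =>
    Function.update_of_ne (hne c hc) _ _
  have himg : rep '' (C : Set (Q H)) ⊆
      Function.update rep (Quotient.mk'' g) g ''
        ((insert (Quotient.mk'' g) C : Finset (Q H)) : Set (Q H)) := by
    rintro x ⟨c, hc, rfl⟩
    exact ⟨c, by simp [hc], (hrepC c hc).symm ▸ rfl⟩
  have hgnot : ∀ x ∈ rep '' (C : Set (Q H)), x ≠ g := by
    rintro x ⟨c, hc, rfl⟩ hx
    exact hg (by rw [← hx, hsec c hc]; exact hc)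
  refine ⟨Finset.mem_insert_of_mem h1, ?_, ?_, ?_, ?_⟩
  · rw [Function.update_of_ne hb]; exact hrep1
  · intro c hc
    rcases Finset.mem_insert.mp hc with rfl | hc
    · rw [Function.update_self]
    · rw [hrepC c hc]; exact hsec c hc
  · intro c hc hcne
    rcases Finset.mem_insert.mp hc with rfl | hc
    · rw [Function.update_self]
      refine ⟨hp2, ?_, ?_⟩
      · rcases hcase with ⟨h1', _⟩ | ⟨h1', _⟩
        · exact ⟨Quotient.mk'' g, by simp, by rw [Function.update_self, h1']⟩
        · exact himg h1'
      · rcases hcase with ⟨_, h2'⟩ | ⟨_, h2'⟩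
        · exact himg h2'
        · exact ⟨Quotient.mk'' g, by simp, by rw [Function.update_self, h2']⟩
    · rw [Function.update_of_ne (hne c hc)]
      obtain ⟨hA, hB, hC⟩ := hφ c hc hcne
      exact ⟨hA, himg hB, himg hC⟩
  · intro c1 hc1 c2 hc2 heq
    simp only [Finset.coe_insert, Set.mem_diff, Set.mem_insert_iff,
      Set.mem_singleton_iff] at hc1 hc2
    have key : ∀ c ∈ C, c ≠ Quotient.mk'' 1 → φ c ≠ p := by
      intro c hc hcne h
      obtain ⟨_, hB, _⟩ := hφ c hc hcne
      rcases hcase with ⟨h1', _⟩ | ⟨_, h2'⟩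
      · exact hgnot _ (h ▸ hB) h1'
      · obtain ⟨_, _, hC⟩ := hφ c hc hcne
        exact hgnot _ (h ▸ hC) h2'
    rcases hc1 with ⟨rfl | hc1, hne1⟩ <;> rcases hc2 with ⟨rfl | hc2, hne2⟩
    · rfl
    · rw [Function.update_self, Function.update_of_ne (hne _ hc2)] at heq
      exact absurd heq.symm (key _ hc2 hne2)
    · rw [Function.update_self, Function.update_of_ne (hne _ hc1)] at heq
      exact absurd heq (key _ hc1 hne1)
    · rw [Function.update_of_ne (hne _ hc1), Function.update_of_ne (hne _ hc2)] at heq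
      exact hinj ⟨hc1, hne1⟩ ⟨hc2, hne2⟩ heq

lemma exists_data [Fintype (Q H)] {S : Finset G} (hS : closure (S : Set G) = ⊤) :
    ∃ (rep : Q H → G) (φ : Q H → G × G),
      rep (Quotient.mk'' 1) = 1 ∧
      (∀ c, Quotient.mk'' (rep c) = c) ∧
      (∀ c, c ≠ (Quotient.mk'' 1 : Q H) →
        (φ c).2 ∈ S ∧ (φ c).1 ∈ Set.range rep ∧ (φ c).1 * (φ c).2 ∈ Set.range rep) ∧
      Set.InjOn φ {c : Q H | c ≠ Quotient.mk'' 1} := by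
  have main : ∀ k (C : Finset (Q H)) (rep : Q H → G) (φ : Q H → G × G),
      Inv H S C rep φ → (Finset.univ \ C).card ≤ k →
      ∃ (rep : Q H → G) (φ : Q H → G × G), Inv H S Finset.univ rep φ := by
    intro k
    induction k with
    | zero =>
      intro C rep φ hI hcard
      have : C = Finset.univ := by
        have := Finset.card_eq_zero.mp (Nat.le_zero.mp hcard)
        have : Finset.univ ⊆ C := fun x hx => by
          by_contra hxc
          exact absurd (Finset.mem_sdiff.mpr ⟨hx, hxc⟩) (by simp [this])
        exact Finset.eq_univ_of_forall (fun x => this (Finset.mem_univ x))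
      exact ⟨rep, φ, this ▸ hI⟩
    | succ k ih =>
      intro C rep φ hI hcard
      by_cases hC : C = Finset.univ
      · exact ⟨rep, φ, hC ▸ hI⟩
      · have hesc : ∃ c ∈ C, ∃ s ∈ S, (Quotient.mk'' (rep c * s) : Q H) ∉ C ∨
            (Quotient.mk'' (rep c * s⁻¹) : Q H) ∉ C := by
          by_contra hno
          push_neg at hno
          apply hC
          apply Finset.eq_univ_of_forall
          intro q
          refine closed_eq_univ hS C hI.1 ?_ q
          intro g hg s hs
          have hrg : (Quotient.mk'' (rep (Quotient.mk'' g)) : Q H) = Quotient.mk'' g :=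
            hI.2.2.1 _ hg
          have h1 := (hno _ hg s hs).1
          have h2 := (hno _ hg s hs).2
          constructor
          · rw [← mk_mul_right hrg s]; exact h1
          · rw [← mk_mul_right hrg s⁻¹]; exact h2
        obtain ⟨c, hc, s, hs, hor⟩ := hesc
        have hrepc : rep c ∈ rep '' (C : Set (Q H)) := ⟨c, hc, rfl⟩
        have hkey : ∃ (g : G) (p : G × G), (Quotient.mk'' g : Q H) ∉ C ∧ p.2 ∈ S ∧
            ((p.1 = g ∧ p.1 * p.2 ∈ rep '' (C : Set (Q H))) ∨
             (p.1 ∈ rep '' (C : Set (Q H)) ∧ p.1 * p.2 = g)) := by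
          rcases hor with hA | hB
          · exact ⟨rep c * s, (rep c, s), hA, hs, Or.inr ⟨hrepc, rfl⟩⟩
          · refine ⟨rep c * s⁻¹, (rep c * s⁻¹, s), hB, hs, Or.inl ⟨rfl, ?_⟩⟩
            simpa using hrepc
        obtain ⟨g, p, hg, hp2, hcase⟩ := hkey
        refine ih _ _ _ (hI.step g p hg hp2 hcase) ?_
        have : Finset.univ \ insert (Quotient.mk'' g) C =
            (Finset.univ \ C).erase (Quotient.mk'' g) := by
          ext x; simp [Finset.mem_sdiff, Finset.mem_erase, and_comm, not_or]
        rw [this]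
        have hmem : (Quotient.mk'' g : Q H) ∈ Finset.univ \ C := by simp [hg]
        have := Finset.card_erase_of_mem hmem
        omega
  obtain ⟨rep, φ, h1, h2, h3, h4, h5⟩ := by
    refine main (Finset.univ \ {Quotient.mk'' 1}).card {Quotient.mk'' 1}
      (fun _ => 1) (fun _ => (1, 1)) ?_ le_rfl
    refine ⟨Finset.mem_singleton_self _, rfl, ?_, ?_, ?_⟩
    · intro c hc; rw [Finset.mem_singleton.mp hc]
    · intro c hc hne; exact absurd (Finset.mem_singleton.mp hc) hne
    · intro x hx y hy _; simp at hx
  refine ⟨rep, φ, h2, fun c => h3 c (Finset.mem_univ c), ?_, ?_⟩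
  · intro c hc
    obtain ⟨hA, hB, hC⟩ := h4 c (Finset.mem_univ c) hc
    refine ⟨hA, ?_, ?_⟩
    · rcases hB with ⟨d, _, hd⟩; exact ⟨d, hd⟩
    · rcases hC with ⟨d, _, hd⟩; exact ⟨d, hd⟩
  · intro x hx y hy h
    exact h5 ⟨Finset.mem_coe.mpr (Finset.mem_univ x), hx⟩
      ⟨Finset.mem_coe.mpr (Finset.mem_univ y), hy⟩ h

lemma closure_erase_one {K : Type*} [Group K] [DecidableEq K] (T : Finset K)
    (h : closure (T : Set K) = ⊤) : closure ((T.erase 1 : Finset K) : Set K) = ⊤ := by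
  rw [eq_top_iff, ← h, closure_le]
  intro x hx
  by_cases hx1 : x = 1
  · subst hx1; exact one_mem _
  · exact subset_closure (by
      simp only [Finset.coe_erase, Set.mem_diff, Set.mem_singleton_iff]
      exact ⟨hx, hx1⟩)

end SchreierAux

open Subgroup SchreierAux Pointwise in
/-- Schreier's inequality: for a finitely generated group `G` and a finite-index
subgroup `H`, `d(H) - 1 ≤ |G : H| * (d(G) - 1)`. -/
theorem schreier_inequality (G : Type*) [Group G] (hG : Group.FG G)
    (H : Subgroup G) (hH : H.FiniteIndex) :
    (minGens H : ℤ) - 1 ≤ (H.index : ℤ) * ((minGens G : ℤ) - 1) := by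
  classical
  -- choose a minimal generating finset of `G`
  have hGne : {n | ∃ S : Finset G, S.card = n ∧ closure (S : Set G) = ⊤}.Nonempty := by
    obtain ⟨S, hS⟩ := hG.1
    exact ⟨S.card, S, rfl, hS⟩
  obtain ⟨S, hScard, hS⟩ : ∃ S : Finset G, S.card = minGens G ∧ closure (S : Set G) = ⊤ :=
    Nat.sInf_mem hGne
  haveI : H.FiniteIndex := hH
  letI := H.fintypeQuotientOfFiniteIndex
  obtain ⟨rep, φ, hrep1, hsec, hφ, hinj⟩ := exists_data (H := H) hS
  set R : Finset G := Finset.univ.image rep with hRdef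
  have hRrange : (R : Set G) = Set.range rep := by
    simp [hRdef, Finset.coe_image, Set.image_univ]
  have hR : IsComplement (H : Set G) (R : Set G) := by
    rw [hRrange]; exact isComplement_range_right hsec
  have hR1 : (1 : G) ∈ R := by
    rw [hRdef, Finset.mem_image]
    exact ⟨Quotient.mk'' 1, Finset.mem_univ _, hrep1⟩
  -- the Schreier generators
  set Tfun : G → H := fun g =>
    ⟨g * (hR.toRightFun g : G)⁻¹,
      hR.mul_inv_toRightFun_mem g⟩ with hTfun
  set T : Finset H := (R * S).image Tfun with hTdef
  have hT : closure (T : Set H) = ⊤ :=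
    Subgroup.closure_mul_image_eq_top' hR hR1 hS
  -- `Tfun` kills elements of `R`
  have htriv : ∀ g ∈ R, Tfun g = 1 := by
    intro g hg
    have huniq := (isComplement_iff_existsUnique_mul_inv_mem.mp hR g)
    have h1 : g * ((⟨g, hg⟩ : (R : Set G)) : G)⁻¹ ∈ H := by
      simpa using H.one_mem
    have := huniq.unique (hR.mul_inv_toRightFun_mem g) h1
    rw [hTfun]
    ext
    simp [this]
  set P : Finset (G × G) := R ×ˢ S with hPdef
  set D : Finset (G × G) := P.filter (fun p => p.1 * p.2 ∈ R) with hDdef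
  set ψ : G × G → H := fun p => Tfun (p.1 * p.2) with hψ
  -- T ⊆ insert 1 ((P \ D).image ψ)
  have hTsub : T ⊆ insert 1 ((P \ D).image ψ) := by
    intro x hx
    rw [hTdef, Finset.mem_image] at hx
    obtain ⟨g, hg, rfl⟩ := hx
    rw [Finset.mem_mul] at hg
    obtain ⟨r, hr, s, hs, rfl⟩ := hg
    by_cases hD : (r, s) ∈ D
    · have : r * s ∈ R := (Finset.mem_filter.mp hD).2
      rw [Finset.mem_insert]
      left
      exact htriv _ this
    · rw [Finset.mem_insert]
      right
      rw [Finset.mem_image]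
      exact ⟨(r, s), Finset.mem_sdiff.mpr ⟨Finset.mem_product.mpr ⟨hr, hs⟩, hD⟩, rfl⟩
  have hTerase : T.erase 1 ⊆ (P \ D).image ψ := by
    intro x hx
    obtain ⟨hx1, hxT⟩ := Finset.mem_erase.mp hx
    rcases Finset.mem_insert.mp (hTsub hxT) with h | h
    · exact absurd h hx1
    · exact h
  -- cardinalities
  have hrepinj : Function.Injective rep := by
    intro c1 c2 h
    rw [← hsec c1, h, hsec c2]
  have hRcard : R.card = Fintype.card (Q H) := by
    rw [hRdef, Finset.card_image_of_injective _ hrepinj, Finset.card_univ]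
  have hQcard : Fintype.card (Q H) = H.index := by
    rw [QuotientGroup.card_quotient_rightRel]
    exact (H.index_eq_card.trans Nat.card_eq_fintype_card).symm
  have hDcard : H.index - 1 ≤ D.card := by
    have := Finset.card_le_card_of_injOn φ
      (s := Finset.univ.erase (Quotient.mk'' 1 : Q H)) (t := D) ?_ ?_
    · have hcard : (Finset.univ.erase (Quotient.mk'' 1 : Q H)).card =
          Fintype.card (Q H) - 1 := by
        rw [Finset.card_erase_of_mem (Finset.mem_univ _), Finset.card_univ]
      omega
    · intro c hc
      have hcne : c ≠ Quotient.mk'' 1 := (Finset.mem_erase.mp hc).1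
      obtain ⟨hA, hB, hC⟩ := hφ c hcne
      rw [hDdef, Finset.mem_coe, Finset.mem_filter]
      constructor
      · rw [hPdef, Finset.mem_product]
        constructor
        · rw [← Finset.mem_coe, hRrange]; exact hB
        · exact hA
      · rw [← Finset.mem_coe, hRrange]; exact hC
    · intro c1 hc1 c2 hc2 h
      exact hinj (Finset.mem_erase.mp (Finset.mem_coe.mp hc1)).1
        (Finset.mem_erase.mp (Finset.mem_coe.mp hc2)).1 h
  have hPcard : P.card = H.index * minGens G := by
    rw [hPdef, Finset.card_product, hRcard, hQcard, hScard]
  have hDP : D ⊆ P := Finset.filter_subset _ _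
  -- minGens H bound
  have hclosure : closure ((T.erase 1 : Finset H) : Set H) = ⊤ :=
    closure_erase_one T hT
  have hmin : minGens H ≤ (T.erase 1).card :=
    Nat.sInf_le ⟨T.erase 1, rfl, hclosure⟩
  have hcount : (T.erase 1).card ≤ P.card - D.card := by
    calc (T.erase 1).card ≤ ((P \ D).image ψ).card := Finset.card_le_card hTerase
      _ ≤ (P \ D).card := Finset.card_image_le
      _ = P.card - D.card := Finset.card_sdiff_of_subset hDP
  have hDle : D.card ≤ P.card := Finset.card_le_card hDP
  have hidx : 1 ≤ H.index := Nat.one_le_iff_ne_zero.mpr hH.1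
  have key : minGens H + H.index ≤ P.card + 1 := by omega
  rw [hPcard] at key
  have keyZ : (minGens H : ℤ) + (H.index : ℤ) ≤ (H.index : ℤ) * (minGens G : ℤ) + 1 := by
    exact_mod_cast key
  rw [mul_sub, mul_one]
  linarith
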